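/- Let Π be the rank-k orthogonal projector onto the span of eigenvectors u₁,...,u_k of a symmetric matrix Σ with eigenvalues λ₁ ≥ ... ≥ λ_p, and let X be any element of the Fantope F^k with complement X^⊥ = I − X. Then ⟨Σ, Π − X⟩ ≥ λ_k ⟨Π, X^⊥⟩ − λ_{k+1} ⟨Π^⊥, X⟩, where Π^⊥ = I − Π. -/

import Mathlib

open Matrix BigOperators Finset

noncomputable def fip {p : ℕ} (A B : Matrix (Fin p) (Fin p) ℝ) : ℝ := (Aᵀ * B).trace

noncomputable def fnorm {p : ℕ} (A : Matrix (Fin p) (Fin p) ℝ) : ℝ :=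
  Real.sqrt (∑ i, ∑ j, (A i j) ^ 2)

def Fantope {p : ℕ} (k : ℕ) (X : Matrix (Fin p) (Fin p) ℝ) : Prop :=
  X.IsSymm ∧ X.PosSemidef ∧ (1 - X).PosSemidef ∧ X.trace = (k : ℝ)

/-- The orthogonal projector onto the span of the top-`k` eigenvectors. -/
def topProj {p : ℕ} (k : ℕ) (u : Fin p → Fin p → ℝ) : Matrix (Fin p) (Fin p) ℝ :=
  ∑ i ∈ Finset.univ.filter (fun i : Fin p => (i : ℕ) < k), vecMulVec (u i) (u i)

section helpers
variable {p : ℕ}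

lemma fip_vecMulVec (v : Fin p → ℝ) (M : Matrix (Fin p) (Fin p) ℝ) :
    fip (vecMulVec v v) M = v ⬝ᵥ M.mulVec v := by
  simp only [fip, Matrix.trace, Matrix.diag, Matrix.mul_apply, Matrix.transpose_apply,
    vecMulVec_apply, dotProduct, Matrix.mulVec, Finset.mul_sum]
  rw [Finset.sum_comm]
  exact Finset.sum_congr rfl fun i _ => Finset.sum_congr rfl fun j _ => by ring

lemma fip_sum_left (s : Finset (Fin p)) (A : Fin p → Matrix (Fin p) (Fin p) ℝ)
    (B : Matrix (Fin p) (Fin p) ℝ) : fip (∑ i ∈ s, A i) B = ∑ i ∈ s, fip (A i) B := by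
  simp [fip, Matrix.transpose_sum, Finset.sum_mul, Matrix.trace_sum]

lemma fip_sum_right (s : Finset (Fin p)) (A : Matrix (Fin p) (Fin p) ℝ)
    (B : Fin p → Matrix (Fin p) (Fin p) ℝ) : fip A (∑ i ∈ s, B i) = ∑ i ∈ s, fip A (B i) := by
  simp [fip, Finset.mul_sum, Matrix.trace_sum]

lemma fip_smul_left (c : ℝ) (A B : Matrix (Fin p) (Fin p) ℝ) :
    fip (c • A) B = c * fip A B := by
  simp [fip, Matrix.transpose_smul, Matrix.smul_mul, Matrix.trace_smul, smul_eq_mul]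

lemma fip_sub_right (A B C : Matrix (Fin p) (Fin p) ℝ) :
    fip A (B - C) = fip A B - fip A C := by
  simp [fip, Matrix.mul_sub, Matrix.trace_sub]

lemma fip_sub_left (A B C : Matrix (Fin p) (Fin p) ℝ) :
    fip (A - B) C = fip A C - fip B C := by
  simp [fip, Matrix.transpose_sub, Matrix.sub_mul, Matrix.trace_sub]

lemma fip_vv_vv (v w : Fin p → ℝ) :
    fip (vecMulVec v v) (vecMulVec w w) = (v ⬝ᵥ w) * (w ⬝ᵥ v) := by
  rw [fip_vecMulVec]
  simp only [dotProduct, Matrix.mulVec, vecMulVec_apply]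
  rw [Finset.sum_mul_sum]
  exact Finset.sum_congr rfl fun i _ => by
    rw [Finset.mul_sum]
    exact Finset.sum_congr rfl fun j _ => by ring

end helpers

/-- with Π the rank-k projector onto the top-k eigenspace of Σ and
X ∈ F^k, ⟨Σ, Π − X⟩ ≥ λ_k ⟨Π, I − X⟩ − λ_{k+1} ⟨I − Π, X⟩. -/
theorem inner_sub_ge_eigen_combination (p k : ℕ) (hk : 0 < k) (hkp : k < p)
    (Sig : Matrix (Fin p) (Fin p) ℝ) (l : Fin p → ℝ) (u : Fin p → Fin p → ℝ)
    (hdecomp : Sig = ∑ i, l i • vecMulVec (u i) (u i))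
    (horth : ∀ i j, u i ⬝ᵥ u j = if i = j then (1 : ℝ) else 0)
    (hl : Antitone l)
    (X : Matrix (Fin p) (Fin p) ℝ) (hX : Fantope k X) :
    fip Sig (topProj k u - X) ≥
      l ⟨k - 1, by omega⟩ * fip (topProj k u) (1 - X) -
        l ⟨k, hkp⟩ * fip (1 - topProj k u) X := by
  set S : Finset (Fin p) := Finset.univ.filter (fun i : Fin p => (i : ℕ) < k) with hS
  set a : Fin p → ℝ := fun i => u i ⬝ᵥ X.mulVec (u i) with ha
  -- completeness of the orthonormal basis
  have hsumvv : ∑ i, vecMulVec (u i) (u i) = (1 : Matrix (Fin p) (Fin p) ℝ) := by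
    have hUU : (Matrix.of u) * (Matrix.of u)ᵀ = 1 := by
      ext i j
      simpa [Matrix.mul_apply, Matrix.one_apply, dotProduct] using horth i j
    have h2 := mul_eq_one_comm.mp hUU
    ext i j
    have := congrFun (congrFun h2 i) j
    simpa [Matrix.mul_apply, vecMulVec_apply, Matrix.sum_apply, Matrix.one_apply,
      mul_comm] using this
  -- bounds on quadratic forms of X
  have ha0 : ∀ i, 0 ≤ a i := fun i => by
    have := hX.2.1.dotProduct_mulVec_nonneg (u i)
    simpa [ha] using this
  have ha1 : ∀ i, a i ≤ 1 := fun i => by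
    have h := hX.2.2.1.dotProduct_mulVec_nonneg (u i)
    have h2 : (0:ℝ) ≤ 1 - a i := by
      simpa [Matrix.sub_mulVec, Matrix.one_mulVec, horth i i, ha] using h
    linarith
  -- fip of rank-one pieces with the projector
  have hvvP : ∀ i : Fin p, fip (vecMulVec (u i) (u i)) (topProj k u)
      = if (i : ℕ) < k then 1 else 0 := by
    intro i
    rw [topProj, fip_sum_right]
    simp only [fip_vv_vv, horth]
    simp [Finset.sum_ite_eq, Finset.mem_filter]
  -- ⟨Σ, Y⟩ expansion
  have hSig : ∀ Y, fip Sig Y = ∑ i, l i * fip (vecMulVec (u i) (u i)) Y := by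
    intro Y
    rw [hdecomp, fip_sum_left]
    exact Finset.sum_congr rfl fun i _ => fip_smul_left _ _ _
  -- key identity for the left side
  have hkey : fip Sig (topProj k u - X)
      = ∑ i, l i * ((if (i : ℕ) < k then 1 else 0) - a i) := by
    rw [hSig]
    exact Finset.sum_congr rfl fun i _ => by
      rw [fip_sub_right, hvvP i, fip_vecMulVec]
  -- ⟨Π, 1 - X⟩
  have hP1X : fip (topProj k u) (1 - X) = ∑ i ∈ S, (1 - a i) := by
    rw [topProj, fip_sum_left]
    exact Finset.sum_congr rfl fun i _ => by
      rw [fip_sub_right, fip_vecMulVec, fip_vecMulVec]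
      simp [Matrix.one_mulVec, horth i i, ha]
  -- ⟨1 - Π, X⟩
  have h1X : fip (1 : Matrix (Fin p) (Fin p) ℝ) X = ∑ i, a i := by
    rw [← hsumvv, fip_sum_left]
    exact Finset.sum_congr rfl fun i _ => fip_vecMulVec _ _
  have hPX : fip (topProj k u) X = ∑ i ∈ S, a i := by
    rw [topProj, fip_sum_left]
    exact Finset.sum_congr rfl fun i _ => fip_vecMulVec _ _
  have h1PX : fip (1 - topProj k u) X = ∑ i ∈ Finset.univ.filter (fun i : Fin p => ¬ (i : ℕ) < k), a i := by
    rw [fip_sub_left, h1X, hPX,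
      ← Finset.sum_filter_add_sum_filter_not Finset.univ (fun i : Fin p => (i : ℕ) < k) a]
    rw [hS]
    ring
  rw [hkey, hP1X, h1PX, Finset.mul_sum, Finset.mul_sum,
    ← Finset.sum_filter_add_sum_filter_not Finset.univ (fun i : Fin p => (i : ℕ) < k)
      (fun i => l i * ((if (i : ℕ) < k then 1 else 0) - a i))]
  have hA : ∑ i ∈ S, l ⟨k - 1, by omega⟩ * (1 - a i)
      ≤ ∑ i ∈ S, l i * ((if (i : ℕ) < k then 1 else 0) - a i) := by
    apply Finset.sum_le_sum
    intro i hi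
    have hik : (i : ℕ) < k := (Finset.mem_filter.mp hi).2
    rw [if_pos hik]
    have hle : l ⟨k - 1, by omega⟩ ≤ l i := hl (by simp [Fin.le_def]; omega)
    have := ha1 i
    nlinarith [ha0 i]
  have hB : ∑ i ∈ Finset.univ.filter (fun i : Fin p => ¬ (i : ℕ) < k), (- (l ⟨k, hkp⟩ * a i))
      ≤ ∑ i ∈ Finset.univ.filter (fun i : Fin p => ¬ (i : ℕ) < k),
          l i * ((if (i : ℕ) < k then 1 else 0) - a i) := by
    apply Finset.sum_le_sum
    intro i hi
    have hik : ¬ (i : ℕ) < k := (Finset.mem_filter.mp hi).2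
    rw [if_neg hik]
    have hle : l i ≤ l ⟨k, hkp⟩ := hl (by simp [Fin.le_def]; omega)
    nlinarith [ha0 i]
  have := add_le_add hA hB
  simp only [Finset.sum_neg_distrib] at this
  linarith
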